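/- Let D ≥ 1 and let X_1, …, X_n be i.i.d. random variables taking values in [0,1] whose common law has a density f with respect to Lebesgue measure satisfying ‖f‖_∞ ≤ D. Then there exist constants c > 0 and M ≥ 1 depending only on D such that for every integer l ≥ 1 with 2^l · l ≤ n, every 0 ≤ k < 2^l, and every u ≥ M, P( | Σ_{i=1}^n ( ψ_{l,k}(X_i) − E[ψ_{l,k}(X_1)] ) | > √(n l) · u ) ≤ 2 · exp( −c l u ). -/

import Mathlib

open MeasureTheory ProbabilityTheory

/-- The Haar wavelet `ψ_{l,k}` on `[0,1]`. -/
noncomputable def haar (l k : ℕ) (x : ℝ) : ℝ :=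
  if (k : ℝ) / 2 ^ l < x ∧ x ≤ ((k : ℝ) + 1 / 2) / 2 ^ l then (2 : ℝ) ^ ((l : ℝ) / 2)
  else if ((k : ℝ) + 1 / 2) / 2 ^ l < x ∧ x ≤ ((k : ℝ) + 1) / 2 ^ l then
    -((2 : ℝ) ^ ((l : ℝ) / 2))
  else 0

set_option maxHeartbeats 1000000

section Aux
open Real

lemma haar_meas (l k : ℕ) : Measurable (haar l k) := by
  unfold haar
  refine Measurable.ite ?_ measurable_const (Measurable.ite ?_ measurable_const measurable_const)
  · exact measurableSet_Ioc (a := (k : ℝ) / 2 ^ l) (b := ((k : ℝ) + 1 / 2) / 2 ^ l)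
  · exact measurableSet_Ioc (a := ((k : ℝ) + 1 / 2) / 2 ^ l) (b := ((k : ℝ) + 1) / 2 ^ l)

lemma haar_abs_le (l k : ℕ) (x : ℝ) : |haar l k x| ≤ 2 ^ ((l : ℝ) / 2) := by
  have h : (0:ℝ) < 2 ^ ((l : ℝ) / 2) := Real.rpow_pos_of_pos two_pos _
  unfold haar
  split_ifs <;> simp [abs_of_pos h, abs_of_neg (neg_neg_of_pos h), le_of_lt h]

lemma sq_rpow_half (l : ℕ) : ((2:ℝ) ^ ((l : ℝ) / 2)) ^ 2 = (2:ℝ) ^ l := by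
  rw [← Real.rpow_natCast ((2:ℝ) ^ ((l : ℝ) / 2)) 2, ← Real.rpow_mul (by norm_num)]
  norm_num [Real.rpow_natCast]

lemma haar_sq (l k : ℕ) (x : ℝ) :
    (haar l k x) ^ 2 =
      Set.indicator (Set.Ioc ((k : ℝ) / 2 ^ l) (((k : ℝ) + 1) / 2 ^ l)) (fun _ => (2:ℝ) ^ l) x := by
  have h2l : (0:ℝ) < 2 ^ l := by positivity
  by_cases hx : x ∈ Set.Ioc ((k : ℝ) / 2 ^ l) (((k : ℝ) + 1) / 2 ^ l)
  · rw [Set.indicator_of_mem hx]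
    obtain ⟨hx1, hx2⟩ := hx
    unfold haar
    by_cases hmid : x ≤ ((k : ℝ) + 1 / 2) / 2 ^ l
    · rw [if_pos ⟨hx1, hmid⟩, sq_rpow_half]
    · rw [if_neg (fun h => hmid h.2), if_pos ⟨lt_of_not_ge hmid, hx2⟩, neg_pow, sq_rpow_half]
      ring
  · rw [Set.indicator_of_notMem hx]
    unfold haar
    have hmid1 : (k : ℝ) / 2 ^ l ≤ ((k : ℝ) + 1 / 2) / 2 ^ l := by gcongr; norm_num
    have hmid2 : ((k : ℝ) + 1 / 2) / 2 ^ l ≤ ((k : ℝ) + 1) / 2 ^ l := by gcongr; norm_num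
    split_ifs with h1 h2
    · exact absurd ⟨h1.1, h1.2.trans hmid2⟩ hx
    · exact absurd ⟨hmid1.trans_lt h2.1, h2.2⟩ hx
    · simp

lemma integral_haar_sq (l k : ℕ) : ∫ x, (haar l k x) ^ 2 = 1 := by
  have h2l : (0:ℝ) < 2 ^ l := by positivity
  simp_rw [haar_sq l k]
  rw [MeasureTheory.integral_indicator (measurableSet_Ioc), setIntegral_const, measureReal_def,
    Real.volume_Ioc]
  have : ((k : ℝ) + 1) / 2 ^ l - (k : ℝ) / 2 ^ l = 1 / 2 ^ l := by ring
  rw [this, ENNReal.toReal_ofReal (by positivity)]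
  rw [smul_eq_mul]; field_simp

lemma exp_le_one_add_sq {x : ℝ} (hx : |x| ≤ 1) : Real.exp x ≤ 1 + x + x ^ 2 := by
  have h := Real.exp_bound hx (n := 2) (by norm_num)
  have h2 : ∑ i ∈ Finset.range 2, x ^ i / (Nat.factorial i) = 1 + x := by
    simp [Finset.sum_range_succ]
  rw [h2] at h
  norm_num [Nat.factorial] at h
  have := abs_le.1 h
  nlinarith [sq_abs x, abs_nonneg x, sq_nonneg x]

lemma mgf_le_of_bdd {Ω : Type*} [MeasurableSpace Ω] {P : Measure Ω} [IsProbabilityMeasure P]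
    {Y : Ω → ℝ} (hY : Measurable Y) {B v t : ℝ} (hB : 0 < B) (hv : 0 ≤ v)
    (hbd : ∀ ω, |Y ω| ≤ B) (hmean : ∫ ω, Y ω ∂P = 0)
    (hvar : ∫ ω, (Y ω) ^ 2 ∂P ≤ v) (ht : |t| ≤ 1 / B) :
    mgf Y P t ≤ Real.exp (t ^ 2 * v) := by
  have hYint : Integrable Y P :=
    (integrable_const B).mono' hY.aestronglyMeasurable (ae_of_all _ fun ω => by
      simpa [Real.norm_eq_abs] using hbd ω)
  have hY2int : Integrable (fun ω => (Y ω) ^ 2) P :=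
    (integrable_const (B ^ 2)).mono' (hY.pow_const 2).aestronglyMeasurable
      (ae_of_all _ fun ω => by
        have := hbd ω
        simp only [Real.norm_eq_abs, abs_pow]
        nlinarith [abs_nonneg (Y ω)])
  have hptbd : ∀ ω, |t * Y ω| ≤ 1 := by
    intro ω
    rw [abs_mul]
    calc |t| * |Y ω| ≤ (1 / B) * B := by
          apply mul_le_mul ht (hbd ω) (abs_nonneg _) (by positivity)
      _ = 1 := by field_simp
  have hpt : ∀ ω, Real.exp (t * Y ω) ≤ 1 + t * Y ω + t ^ 2 * (Y ω) ^ 2 := by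
    intro ω
    have := exp_le_one_add_sq (hptbd ω)
    calc Real.exp (t * Y ω) ≤ 1 + t * Y ω + (t * Y ω) ^ 2 := this
      _ = 1 + t * Y ω + t ^ 2 * (Y ω) ^ 2 := by ring
  have hrint : Integrable (fun ω => 1 + t * Y ω + t ^ 2 * (Y ω) ^ 2) P :=
    ((integrable_const 1).add (hYint.const_mul t)).add (hY2int.const_mul (t ^ 2))
  have hexpint : Integrable (fun ω => Real.exp (t * Y ω)) P :=
    (integrable_const (Real.exp 1)).mono'
      (hY.const_mul t).exp.aestronglyMeasurable (ae_of_all _ fun ω => by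
        rw [Real.norm_eq_abs, abs_of_pos (Real.exp_pos _)]
        exact Real.exp_le_exp.2 ((le_abs_self _).trans (hptbd ω)))
  calc mgf Y P t = ∫ ω, Real.exp (t * Y ω) ∂P := rfl
    _ ≤ ∫ ω, (1 + t * Y ω + t ^ 2 * (Y ω) ^ 2) ∂P :=
        integral_mono hexpint hrint fun ω => hpt ω
    _ = 1 + t * (∫ ω, Y ω ∂P) + t ^ 2 * ∫ ω, (Y ω) ^ 2 ∂P := by
        have h1 : Integrable (fun ω => 1 + t * Y ω) P :=
          (integrable_const 1).add (hYint.const_mul t)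
        rw [integral_add h1 (hY2int.const_mul (t ^ 2)),
          integral_add (integrable_const 1) (hYint.const_mul t),
          integral_const, integral_const_mul, integral_const_mul]
        simp
    _ ≤ 1 + t ^ 2 * v := by
        rw [hmean, mul_zero, add_zero]
        nlinarith [sq_nonneg t]
    _ ≤ Real.exp (t ^ 2 * v) := by
        have := Real.add_one_le_exp (t ^ 2 * v)
        linarith
end Aux

/-- Let `D ≥ 1` and let `X 0, …, X (n-1)` be i.i.d. on `[0,1]` with common
law having density `f` with `‖f‖_∞ ≤ D`. Then there are constants `c > 0` and `M ≥ 1`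
depending only on `D` such that for every `l ≥ 1` with `2^l · l ≤ n`, every `k < 2^l`, and
every `u ≥ M`,
`P(|Σ_{i<n} (ψ_{l,k}(X_i) − E ψ_{l,k}(X_0))| > √(n l) · u) ≤ 2 exp(−c l u)`. -/
theorem bernstein_haar_concentration (D : ℝ) (hD : 1 ≤ D) :
    ∃ c : ℝ, 0 < c ∧ ∃ M : ℝ, 1 ≤ M ∧
      ∀ (Ω : Type) (_ : MeasurableSpace Ω) (P : Measure Ω), IsProbabilityMeasure P →
      ∀ (n : ℕ) (X : Fin n → Ω → ℝ) (f : ℝ → ℝ), Measurable f →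
      (∀ᵐ x ∂(volume : Measure ℝ), 0 ≤ f x) →
      (∀ᵐ x ∂(volume : Measure ℝ), x ∉ Set.Icc (0 : ℝ) 1 → f x = 0) →
      (∀ᵐ x ∂(volume : Measure ℝ), f x ≤ D) →
      ∀ (μ : Measure ℝ), μ = volume.withDensity (fun x => ENNReal.ofReal (f x)) →
      (∀ i, Measurable (X i)) →
      (∀ i, Measure.map (X i) P = μ) →
      iIndepFun X P →
      ∀ (l k : ℕ) (u : ℝ), 1 ≤ l → 2 ^ l * l ≤ n → k < 2 ^ l → M ≤ u →
        P {ω | Real.sqrt ((n : ℝ) * l) * u <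
            |∑ i, (haar l k (X i ω) - ∫ x, haar l k x ∂μ)|} ≤
          ENNReal.ofReal (2 * Real.exp (-c * l * u)) := by
  have hD0 : (0:ℝ) < D := lt_of_lt_of_le one_pos hD
  refine ⟨(4*D)⁻¹, by positivity, 1, le_rfl, ?_⟩
  intro Ω mΩ P hP n X f hf hf0 hfsupp hfD μ hμ hX hmap hindep l k u hl hn hk hu
  -- basic positivity facts
  have hn0 : 0 < n := lt_of_lt_of_le (by positivity) hn
  have hnR : ((2:ℝ) ^ l * l) ≤ (n : ℝ) := by exact_mod_cast hn
  have hnRpos : (0:ℝ) < n := by exact_mod_cast hn0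
  have hl1 : (1:ℝ) ≤ (l : ℝ) := by exact_mod_cast hl
  have hu1 : (1:ℝ) ≤ u := hu
  set b : ℝ := (2:ℝ) ^ ((l : ℝ) / 2) with hb_def
  have hb : 0 < b := Real.rpow_pos_of_pos two_pos _
  have hb2 : b ^ 2 = (2:ℝ) ^ l := sq_rpow_half l
  -- μ is a probability measure
  have hμprob : IsProbabilityMeasure μ := by
    rw [← hmap ⟨0, hn0⟩]
    exact Measure.isProbabilityMeasure_map (hX ⟨0, hn0⟩).aemeasurable
  -- integrability of haar over μ
  have hgint : Integrable (haar l k) μ :=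
    (integrable_const b).mono' (haar_meas l k).aestronglyMeasurable
      (ae_of_all _ fun x => by simpa [Real.norm_eq_abs] using haar_abs_le l k x)
  have hg2int : Integrable (fun x => (haar l k x) ^ 2) μ :=
    (integrable_const (b ^ 2)).mono' ((haar_meas l k).pow_const 2).aestronglyMeasurable
      (ae_of_all _ fun x => by
        have := haar_abs_le l k x
        simp only [Real.norm_eq_abs, abs_pow]
        nlinarith [abs_nonneg (haar l k x)])
  set m : ℝ := ∫ x, haar l k x ∂μ with hm_def
  have hm : |m| ≤ b := by
    have := norm_integral_le_of_norm_le_const (μ := μ) (f := haar l k) (C := b)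
      (ae_of_all _ fun x => by simpa [Real.norm_eq_abs] using haar_abs_le l k x)
    simpa [Real.norm_eq_abs, measure_univ] using this
  -- second moment bound
  have hgsq_le : ∫ x, (haar l k x) ^ 2 ∂μ ≤ D := by
    have hkey : ∫ x, (haar l k x) ^ 2 ∂μ =
        ∫ x, ((f x).toNNReal : ℝ) • (haar l k x) ^ 2 := by
      rw [hμ]
      exact integral_withDensity_eq_integral_smul hf.real_toNNReal _
    rw [hkey]
    have hDint : Integrable (fun x => D * (haar l k x) ^ 2) volume := by
      have : Integrable (fun x => (haar l k x) ^ 2) volume := by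
        simp_rw [haar_sq l k]
        exact (integrable_indicator_iff measurableSet_Ioc).2
          (integrableOn_const measure_Ioc_lt_top.ne)
      exact this.const_mul D
    have hle : ∫ x, ((f x).toNNReal : ℝ) • (haar l k x) ^ 2 ≤
        ∫ x, D * (haar l k x) ^ 2 := by
      apply integral_mono_of_nonneg
      · exact ae_of_all _ fun x => by positivity
      · exact hDint
      · filter_upwards [hf0, hfD] with x hx0 hxD
        simp only [smul_eq_mul]
        have : ((f x).toNNReal : ℝ) = f x := Real.coe_toNNReal _ hx0
        rw [this]
        exact mul_le_mul_of_nonneg_right hxD (sq_nonneg _)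
    calc _ ≤ ∫ x, D * (haar l k x) ^ 2 := hle
      _ = D * ∫ x, (haar l k x) ^ 2 := integral_const_mul D _
      _ = D := by rw [integral_haar_sq]; ring
  -- variance bound
  have hVar : ∫ x, (haar l k x - m) ^ 2 ∂μ ≤ D := by
    have hpt : ∀ x, (haar l k x - m) ^ 2 =
        (haar l k x) ^ 2 - (2*m) * haar l k x + m ^ 2 := fun x => by ring
    simp_rw [hpt]
    have hInt1 : Integrable (fun x => (haar l k x) ^ 2 - (2*m) * haar l k x) μ :=
      hg2int.sub (hgint.const_mul (2*m))
    rw [integral_add hInt1 (integrable_const _),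
      integral_sub hg2int (hgint.const_mul (2*m)), integral_const_mul, integral_const]
    simp only [measure_univ, probReal_univ, ENNReal.toReal_one, smul_eq_mul, one_mul, ← hm_def]
    nlinarith [sq_nonneg m, hgsq_le]
  -- the centered variables
  set Y : Fin n → Ω → ℝ := fun i => (fun x => haar l k x - m) ∘ X i with hY_def
  have hYmeas : ∀ i, Measurable (Y i) :=
    fun i => ((haar_meas l k).sub measurable_const).comp (hX i)
  have hYbd : ∀ i ω, |Y i ω| ≤ 2 * b := by
    intro i ω
    simp only [hY_def, Function.comp_apply]
    calc |haar l k (X i ω) - m| ≤ |haar l k (X i ω)| + |m| := abs_sub _ _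
      _ ≤ b + b := add_le_add (haar_abs_le l k _) hm
      _ = 2 * b := by ring
  have hYmean : ∀ i, ∫ ω, Y i ω ∂P = 0 := by
    intro i
    have hmeq := MeasureTheory.integral_map (μ := P) (φ := X i) (f := fun x => haar l k x - m)
      (hX i).aemeasurable ((haar_meas l k).sub measurable_const).aestronglyMeasurable
    rw [hmap i] at hmeq
    simp only [hY_def, Function.comp_apply]
    rw [← hmeq, integral_sub hgint (integrable_const m), integral_const]
    simp [measure_univ, ← hm_def]
  have hYvar : ∀ i, ∫ ω, (Y i ω) ^ 2 ∂P ≤ D := by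
    intro i
    have hmeq := MeasureTheory.integral_map (μ := P) (φ := X i) (f := fun x => (haar l k x - m) ^ 2)
      (hX i).aemeasurable
      (((haar_meas l k).sub measurable_const).pow_const 2).aestronglyMeasurable
    rw [hmap i] at hmeq
    simp only [hY_def, Function.comp_apply]
    rw [← hmeq]
    exact hVar
  have hYindep : iIndepFun Y P :=
    hindep.comp (fun _ => fun x => haar l k x - m)
      (fun _ => (haar_meas l k).sub measurable_const)
  -- mgf bounds
  have hmgf_i : ∀ (i : Fin n) (t' : ℝ), |t'| ≤ 1 / (2*b) →
      mgf (Y i) P t' ≤ Real.exp (t' ^ 2 * D) := fun i t' ht' =>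
    mgf_le_of_bdd (hYmeas i) (by positivity) hD0.le (hYbd i) (hYmean i) (hYvar i) ht'
  have hexpint : ∀ t' : ℝ, Integrable (fun ω => Real.exp (t' * (∑ i, Y i) ω)) P := by
    intro t'
    apply hYindep.integrable_exp_mul_sum hYmeas
    intro i _
    refine (integrable_const (Real.exp (|t'| * (2*b)))).mono'
      ((hYmeas i).const_mul t').exp.aestronglyMeasurable (ae_of_all _ fun ω => ?_)
    rw [Real.norm_eq_abs, abs_of_pos (Real.exp_pos _)]
    apply Real.exp_le_exp.2
    calc t' * Y i ω ≤ |t' * Y i ω| := le_abs_self _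
      _ = |t'| * |Y i ω| := abs_mul _ _
      _ ≤ |t'| * (2*b) := mul_le_mul_of_nonneg_left (hYbd i ω) (abs_nonneg _)
  have hmgfS : ∀ t' : ℝ, |t'| ≤ 1 / (2*b) →
      mgf (∑ i, Y i) P t' ≤ Real.exp ((n:ℝ) * (t' ^ 2 * D)) := by
    intro t' ht'
    rw [hYindep.mgf_sum hYmeas Finset.univ]
    calc ∏ i, mgf (Y i) P t' ≤ ∏ _i : Fin n, Real.exp (t' ^ 2 * D) :=
        Finset.prod_le_prod (fun i _ => mgf_nonneg) (fun i _ => hmgf_i i t' ht')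
      _ = Real.exp ((n:ℝ) * (t' ^ 2 * D)) := by
        rw [Finset.prod_const, ← Real.exp_nat_mul]
        simp
  -- choose t
  set s : ℝ := Real.sqrt ((n : ℝ) * l) * u with hs_def
  have hsqrt_sq : (Real.sqrt ((n : ℝ) * l)) ^ 2 = (n:ℝ) * l :=
    Real.sq_sqrt (by positivity)
  have hs_pos : 0 < s := by
    apply mul_pos _ (lt_of_lt_of_le one_pos hu1)
    apply Real.sqrt_pos.2
    positivity
  have hs_sq : s ^ 2 = (n:ℝ) * l * u ^ 2 := by
    rw [hs_def, mul_pow, hsqrt_sq]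
  have hsqrt_ge : b * l ≤ Real.sqrt ((n : ℝ) * l) := by
    have h1 : (b * l) ^ 2 ≤ (n:ℝ) * l := by
      have : (b * l) ^ 2 = ((2:ℝ)^l * l) * l := by rw [mul_pow, hb2]; ring
      rw [this]
      apply mul_le_mul_of_nonneg_right hnR (by linarith)
    calc b * l = Real.sqrt ((b * l) ^ 2) := (Real.sqrt_sq (by positivity)).symm
      _ ≤ Real.sqrt ((n:ℝ) * l) := Real.sqrt_le_sqrt h1
  have hs_ge : b * l * u ≤ s := by
    rw [hs_def]
    exact mul_le_mul_of_nonneg_right hsqrt_ge (by linarith)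
  set t : ℝ := min (s / (2 * (n:ℝ) * D)) (1 / (2*b)) with ht_def
  have ht0 : 0 ≤ t := le_min (by positivity) (by positivity)
  have htle : t ≤ 1 / (2*b) := min_le_right _ _
  have htabs : |t| ≤ 1 / (2*b) := by rwa [abs_of_nonneg ht0]
  have htabs' : |(-t)| ≤ 1 / (2*b) := by rwa [abs_neg]
  -- exponent bound
  have hexpbd : -(t*s) + (n:ℝ) * (t ^ 2 * D) ≤ -((4*D)⁻¹ * l * u) := by
    rcases le_or_gt (s / (2 * (n:ℝ) * D)) (1 / (2*b)) with hcase | hcase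
    · have ht_eq : t = s / (2 * (n:ℝ) * D) := min_eq_left hcase
      have key : -(t*s) + (n:ℝ) * (t ^ 2 * D) = -(s ^ 2) / (4 * (n:ℝ) * D) := by
        rw [ht_eq]; field_simp; ring
      rw [key, hs_sq]
      have heq2 : -((n:ℝ) * l * u ^ 2) / (4 * (n:ℝ) * D) = -((l : ℝ) * u ^ 2) / (4 * D) := by
        field_simp
      rw [heq2]
      have he : (4*D)⁻¹ * (l:ℝ) * u = ((l:ℝ) * u) / (4 * D) := by ring
      rw [he, neg_div, neg_le_neg_iff]
      have hnum : (l:ℝ) * u ≤ (l:ℝ) * u ^ 2 := by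
        nlinarith [mul_nonneg (show (0:ℝ) ≤ (l:ℝ) by linarith)
          (show (0:ℝ) ≤ u ^ 2 - u by nlinarith)]
      exact (div_le_div_iff_of_pos_right (by positivity : (0:ℝ) < 4 * D)).mpr hnum
    · have ht_eq : t = 1 / (2*b) := min_eq_right hcase.le
      have hnD : (n:ℝ) * D ≤ s * b := by
        rw [div_lt_div_iff₀ (by positivity) (by positivity)] at hcase
        nlinarith
      have key : -(t*s) + (n:ℝ) * (t ^ 2 * D) = ((n:ℝ) * D - 2 * s * b) / (4 * b ^ 2) := by
        rw [ht_eq]; field_simp; ring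
      rw [key]
      have h1 : ((n:ℝ) * D - 2 * s * b) / (4 * b ^ 2) ≤ (s * b - 2 * s * b) / (4 * b ^ 2) := by
        gcongr
      have h2 : (s * b - 2 * s * b) / (4 * b ^ 2) = -(s / (4 * b)) := by
        field_simp; ring
      have h3 : (l:ℝ) * u / 4 ≤ s / (4 * b) := by
        rw [div_le_div_iff₀ (by norm_num) (by positivity)]
        nlinarith
      have h4 : (4*D)⁻¹ * l * u ≤ (l:ℝ) * u / 4 := by
        have : (4*D)⁻¹ * l * u = ((l:ℝ) * u) / (4 * D) := by ring
        rw [this]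
        apply div_le_div_of_nonneg_left (by positivity) (by norm_num) (by nlinarith)
      linarith
  -- Chernoff bounds
  have hup : (P {ω | s ≤ (∑ i, Y i) ω}).toReal ≤ Real.exp (-((4*D)⁻¹ * l * u)) := by
    calc (P {ω | s ≤ (∑ i, Y i) ω}).toReal
        ≤ Real.exp (-t * s) * mgf (∑ i, Y i) P t :=
          measure_ge_le_exp_mul_mgf s ht0 (hexpint t)
      _ ≤ Real.exp (-t * s) * Real.exp ((n:ℝ) * (t ^ 2 * D)) :=
          mul_le_mul_of_nonneg_left (hmgfS t htabs) (Real.exp_pos _).le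
      _ = Real.exp (-(t*s) + (n:ℝ) * (t ^ 2 * D)) := by rw [← Real.exp_add]; ring_nf
      _ ≤ Real.exp (-((4*D)⁻¹ * l * u)) := Real.exp_le_exp.2 hexpbd
  have hlo : (P {ω | (∑ i, Y i) ω ≤ -s}).toReal ≤ Real.exp (-((4*D)⁻¹ * l * u)) := by
    calc (P {ω | (∑ i, Y i) ω ≤ -s}).toReal
        ≤ Real.exp (-(-t) * (-s)) * mgf (∑ i, Y i) P (-t) :=
          measure_le_le_exp_mul_mgf (-s) (neg_nonpos.2 ht0) (hexpint (-t))
      _ ≤ Real.exp (-(-t) * (-s)) * Real.exp ((n:ℝ) * ((-t) ^ 2 * D)) :=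
          mul_le_mul_of_nonneg_left (hmgfS (-t) htabs') (Real.exp_pos _).le
      _ = Real.exp (-(t*s) + (n:ℝ) * (t ^ 2 * D)) := by rw [← Real.exp_add]; ring_nf
      _ ≤ Real.exp (-((4*D)⁻¹ * l * u)) := Real.exp_le_exp.2 hexpbd
  -- event inclusion
  have hsub : {ω | s < |∑ i, (haar l k (X i ω) - m)|} ⊆
      {ω | s ≤ (∑ i, Y i) ω} ∪ {ω | (∑ i, Y i) ω ≤ -s} := by
    intro ω hω
    simp only [Set.mem_setOf_eq] at hω
    have hsum : (∑ i, Y i) ω = ∑ i, (haar l k (X i ω) - m) := by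
      simp [hY_def, Finset.sum_apply]
    simp only [Set.mem_union, Set.mem_setOf_eq, hsum]
    rcases abs_cases (∑ i, (haar l k (X i ω) - m)) with ⟨heq, _⟩ | ⟨heq, _⟩
    · left; rw [heq] at hω; exact hω.le
    · right; rw [heq] at hω; linarith
  -- conclude
  calc P {ω | s < |∑ i, (haar l k (X i ω) - m)|}
      ≤ P ({ω | s ≤ (∑ i, Y i) ω} ∪ {ω | (∑ i, Y i) ω ≤ -s}) := measure_mono hsub
    _ ≤ P {ω | s ≤ (∑ i, Y i) ω} + P {ω | (∑ i, Y i) ω ≤ -s} := measure_union_le _ _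
    _ ≤ ENNReal.ofReal (Real.exp (-((4*D)⁻¹ * l * u))) +
        ENNReal.ofReal (Real.exp (-((4*D)⁻¹ * l * u))) := by
        gcongr
        · rw [← ENNReal.ofReal_toReal (measure_ne_top P _)]
          exact ENNReal.ofReal_le_ofReal hup
        · rw [← ENNReal.ofReal_toReal (measure_ne_top P _)]
          exact ENNReal.ofReal_le_ofReal hlo
    _ = ENNReal.ofReal (2 * Real.exp (-(4*D)⁻¹ * l * u)) := by
        rw [← ENNReal.ofReal_add (Real.exp_pos _).le (Real.exp_pos _).le]
        congr 1
        rw [two_mul]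
        congr 2 <;> ring
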